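/- Let d ≥ 2, N ≥ 2, j ∈ {2,…,N}, and set p_1 = ∑_{k=2}^N d^{N−k}. Suppose i_k, i'_k ∈ {0,…,d−1} for each k ∈ {2,…,N}∖{j} and s, s' ∈ {0,…,d−1} satisfy s·p_1 + ∑_{k∈{2,…,N}∖{j}} i_k·d^{N−k} = s'·p_1 + ∑_{k∈{2,…,N}∖{j}} i'_k·d^{N−k}. Then s = s' and i_k = i'_k for all k ∈ {2,…,N}∖{j}. -/

import Mathlib

open Finset

lemma geo' (d : ℕ) (hd : 1 ≤ d) (n : ℕ) : (d-1) * (∑ e ∈ range n, d^e) + 1 = d^n := by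
  induction n with
  | zero => simp
  | succ n ih =>
    rw [sum_range_succ, pow_succ, mul_add]
    have h2 : (d - 1) * d^n + d^n = d^n * d := by
      have h : (d - 1 + 1) * d^n = d^n * d := by rw [Nat.sub_add_cancel hd, mul_comm]
      rw [add_mul, one_mul] at h
      omega
    omega

lemma arith (d P A L L' X1 X2 s s' u u' v v' : ℕ)
    (hd : 2 ≤ d) (hs : s < d) (hs' : s' < d) (hle : s ≤ s')
    (hPd : (d-1)*A + 1 = P)
    (hsA : s*A ≤ (d-1)*A) (hsA' : s'*A ≤ (d-1)*A)
    (hLb : L ≤ (d-1)*A) (hLb' : L' ≤ (d-1)*A)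
    (hu : u = s*A + L) (hu' : u' = s'*A + L')
    (hv : v = s + d*X1) (hv' : v' = s' + d*X2)
    (E : u + P*v = u' + P*v')
    (hglob : ¬(s = 0 ∧ s' = d-1)) : s = s' := by
  have hP1 : 1 ≤ P := by omega
  have hub : u + 2 ≤ 2*P := by omega
  have hub' : u' + 2 ≤ 2*P := by omega
  have hvv : v = v' ∨ v = v' + 1 ∨ v' = v + 1 := by
    have c1 : ¬ (v + 2 ≤ v') := by
      intro hc
      have h1 : P * (v + 2) ≤ P * v' := Nat.mul_le_mul_left P hc
      have h2 : P * (v + 2) = P * v + 2 * P := by ring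
      omega
    have c2 : ¬ (v' + 2 ≤ v) := by
      intro hc
      have h1 : P * (v' + 2) ≤ P * v := Nat.mul_le_mul_left P hc
      have h2 : P * (v' + 2) = P * v' + 2 * P := by ring
      omega
    omega
  have hd1 : ∀ X Y : ℕ, X < Y → d * X + d ≤ d * Y := by
    intro X Y hXY
    have h1 : d * (X + 1) ≤ d * Y := Nat.mul_le_mul_left d (Nat.succ_le_of_lt hXY)
    have h2 : d * (X + 1) = d * X + d := by ring
    omega
  rcases hvv with hc | hc | hc
  · have hE : s + d*X1 = s' + d*X2 := by omega
    rcases lt_trichotomy X1 X2 with h' | h' | h'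
    · have := hd1 _ _ h'; omega
    · subst h'; omega
    · have := hd1 _ _ h'; omega
  · exfalso
    have hm : P * v = P * v' + P := by rw [hc]; ring
    have hueq : u + P = u' := by omega
    have hE : s + d*X1 = s' + 1 + d*X2 := by omega
    rcases lt_trichotomy X1 X2 with h' | h' | h'
    · have := hd1 _ _ h'; omega
    · subst h'; omega
    · have := hd1 _ _ h'
      exact hglob (by omega)
  · exfalso
    have hm : P * v' = P * v + P := by rw [hc]; ring
    have hueq : u = u' + P := by omega
    have hE : s' + d*X2 = s + 1 + d*X1 := by omega
    rcases lt_trichotomy X1 X2 with h' | h' | h'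
    · have := hd1 _ _ h'
      omega
    · subst h'
      have hs1 : s' = s + 1 := by omega
      have hexp : (s+1) * A = s * A + A := by ring
      rw [hu, hu', hs1, hexp] at hueq
      omega
    · have := hd1 _ _ h'
      omega

lemma key (d m t : ℕ) (hd : 2 ≤ d) (ht : t < m) (f f' : ℕ → ℕ)
    (hf : ∀ e ∈ (range m).erase t, f e < d) (hf' : ∀ e ∈ (range m).erase t, f' e < d)
    (s s' : ℕ) (hs : s < d) (hs' : s' < d) (hle : s ≤ s')
    (heq : s * (∑ e ∈ range m, d^e) + ∑ e ∈ (range m).erase t, f e * d^e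
         = s' * (∑ e ∈ range m, d^e) + ∑ e ∈ (range m).erase t, f' e * d^e) :
    s = s' := by
  have split : ∀ g : ℕ → ℕ, ∑ e ∈ (range m).erase t, g e
      = ∑ e ∈ range t, g e + ∑ e ∈ Ico (t+1) m, g e := by
    intro g
    have h1 : ∑ e ∈ Ico 0 t, g e + ∑ e ∈ Ico t m, g e = ∑ e ∈ Ico 0 m, g e :=
      Finset.sum_Ico_consecutive g (Nat.zero_le t) (le_of_lt ht)
    rw [← range_eq_Ico, ← range_eq_Ico] at h1
    have h2 : ∑ e ∈ Ico t m, g e = g t + ∑ e ∈ Ico (t+1) m, g e :=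
      Finset.sum_eq_sum_Ico_succ_bot ht g
    have h3 : g t + ∑ e ∈ (range m).erase t, g e = ∑ e ∈ range m, g e :=
      Finset.add_sum_erase _ g (mem_range.2 ht)
    omega
  have hi : ∀ g : ℕ → ℕ, ∑ e ∈ Ico (t+1) m, g e * d^e
      = d * d^t * ∑ e ∈ Ico (t+1) m, g e * d^(e-(t+1)) := by
    intro g
    rw [mul_sum]
    apply sum_congr rfl
    intro e he
    have he1 : t + 1 ≤ e := (mem_Ico.1 he).1
    have hpow : d^e = d^(t+1) * d^(e-(t+1)) := by rw [← pow_add]; congr 1; omega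
    rw [hpow, pow_succ]
    ring
  have eG : ∑ e ∈ range m, d^e
      = (∑ e ∈ range t, d^e) + d^t + d * d^t * (∑ e ∈ Ico (t+1) m, d^(e-(t+1))) := by
    have h1 := split (fun e => d^e)
    have h2 : ∑ e ∈ Ico (t+1) m, d^e = d * d^t * ∑ e ∈ Ico (t+1) m, d^(e-(t+1)) := by
      have := hi (fun _ => 1)
      simpa using this
    have h3 : d^t + ∑ e ∈ (range m).erase t, d^e = ∑ e ∈ range m, d^e :=
      Finset.add_sum_erase _ (fun e => d^e) (mem_range.2 ht)
    omega
  have eX : ∑ e ∈ (range m).erase t, f e * d^e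
      = (∑ e ∈ range t, f e * d^e) + d * d^t * (∑ e ∈ Ico (t+1) m, f e * d^(e-(t+1))) := by
    rw [split (fun e => f e * d^e), hi f]
  have eX' : ∑ e ∈ (range m).erase t, f' e * d^e
      = (∑ e ∈ range t, f' e * d^e) + d * d^t * (∑ e ∈ Ico (t+1) m, f' e * d^(e-(t+1))) := by
    rw [split (fun e => f' e * d^e), hi f']
  have hgeo := geo' d (by omega) t
  have hrsub : ∀ e ∈ range t, e ∈ (range m).erase t := by
    intro e he
    simp only [mem_erase, mem_range] at *
    omega
  have hLb : ∑ e ∈ range t, f e * d^e ≤ (d-1) * ∑ e ∈ range t, d^e := by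
    rw [mul_sum]
    exact sum_le_sum (fun e he => Nat.mul_le_mul_right _ (by have := hf e (hrsub e he); omega))
  have hLb' : ∑ e ∈ range t, f' e * d^e ≤ (d-1) * ∑ e ∈ range t, d^e := by
    rw [mul_sum]
    exact sum_le_sum (fun e he => Nat.mul_le_mul_right _ (by have := hf' e (hrsub e he); omega))
  have hsA : s * (∑ e ∈ range t, d^e) ≤ (d-1) * ∑ e ∈ range t, d^e :=
    Nat.mul_le_mul_right _ (by omega)
  have hsA' : s' * (∑ e ∈ range t, d^e) ≤ (d-1) * ∑ e ∈ range t, d^e :=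
    Nat.mul_le_mul_right _ (by omega)
  have E : (s * (∑ e ∈ range t, d^e) + ∑ e ∈ range t, f e * d^e)
        + d^t * (s + d*(s * (∑ e ∈ Ico (t+1) m, d^(e-(t+1))) + ∑ e ∈ Ico (t+1) m, f e * d^(e-(t+1))))
      = (s' * (∑ e ∈ range t, d^e) + ∑ e ∈ range t, f' e * d^e)
        + d^t * (s' + d*(s' * (∑ e ∈ Ico (t+1) m, d^(e-(t+1))) + ∑ e ∈ Ico (t+1) m, f' e * d^(e-(t+1)))) := by
    calc (s * (∑ e ∈ range t, d^e) + ∑ e ∈ range t, f e * d^e)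
        + d^t * (s + d*(s * (∑ e ∈ Ico (t+1) m, d^(e-(t+1))) + ∑ e ∈ Ico (t+1) m, f e * d^(e-(t+1))))
        = s * ((∑ e ∈ range t, d^e) + d^t + d * d^t * (∑ e ∈ Ico (t+1) m, d^(e-(t+1))))
          + ((∑ e ∈ range t, f e * d^e) + d * d^t * (∑ e ∈ Ico (t+1) m, f e * d^(e-(t+1)))) := by ring
      _ = s * (∑ e ∈ range m, d^e) + ∑ e ∈ (range m).erase t, f e * d^e := by rw [eG, eX]
      _ = s' * (∑ e ∈ range m, d^e) + ∑ e ∈ (range m).erase t, f' e * d^e := heq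
      _ = s' * ((∑ e ∈ range t, d^e) + d^t + d * d^t * (∑ e ∈ Ico (t+1) m, d^(e-(t+1))))
          + ((∑ e ∈ range t, f' e * d^e) + d * d^t * (∑ e ∈ Ico (t+1) m, f' e * d^(e-(t+1)))) := by rw [eG, eX']
      _ = _ := by ring
  have hglob : ¬(s = 0 ∧ s' = d-1) := by
    rintro ⟨h0, h1⟩
    subst h0; subst h1
    have hb1 : ∑ e ∈ (range m).erase t, f e * d^e ≤ ∑ e ∈ (range m).erase t, (d-1) * d^e :=
      sum_le_sum (fun e he => Nat.mul_le_mul_right _ (by have := hf e he; omega))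
    have hb2 : (d-1) * d^t + ∑ e ∈ (range m).erase t, (d-1)*d^e = ∑ e ∈ range m, (d-1)*d^e :=
      Finset.add_sum_erase _ (fun e => (d-1)*d^e) (mem_range.2 ht)
    have hb3 : ∑ e ∈ range m, (d-1)*d^e = (d-1) * ∑ e ∈ range m, d^e := (mul_sum _ _ _).symm
    have hP2 : 1 ≤ (d-1) * d^t := Nat.mul_pos (by omega) (Nat.pow_pos (by omega))
    rw [zero_mul, zero_add] at heq
    omega
  exact arith d (d^t) (∑ e ∈ range t, d^e)
    (∑ e ∈ range t, f e * d^e) (∑ e ∈ range t, f' e * d^e)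
    (s * (∑ e ∈ Ico (t+1) m, d^(e-(t+1))) + ∑ e ∈ Ico (t+1) m, f e * d^(e-(t+1)))
    (s' * (∑ e ∈ Ico (t+1) m, d^(e-(t+1))) + ∑ e ∈ Ico (t+1) m, f' e * d^(e-(t+1)))
    s s' _ _ _ _ hd hs hs' hle hgeo hsA hsA' hLb hLb' rfl rfl rfl rfl E hglob

lemma lt_pow' (d : ℕ) (hd : 2 ≤ d) (F : Finset ℕ) (M : ℕ) (hFM : ∀ e ∈ F, e < M)
    (f : ℕ → ℕ) (hf : ∀ e ∈ F, f e < d) : ∑ e ∈ F, f e * d^e < d^M := by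
  have h1 : ∑ e ∈ F, f e * d^e ≤ ∑ e ∈ F, (d-1) * d^e :=
    sum_le_sum (fun e he => Nat.mul_le_mul_right _ (by have := hf e he; omega))
  have h2 : ∑ e ∈ F, (d-1) * d^e ≤ ∑ e ∈ range M, (d-1)*d^e := by
    apply sum_le_sum_of_subset (fun e he => mem_range.2 (hFM e he))
  have h3 : ∑ e ∈ range M, (d-1)*d^e = (d-1) * ∑ e ∈ range M, d^e := (mul_sum _ _ _).symm
  have h4 := geo' d (by omega) M
  omega

lemma digits_unique (d : ℕ) (hd : 2 ≤ d) (F : Finset ℕ) (f f' : ℕ → ℕ)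
    (hf : ∀ e ∈ F, f e < d) (hf' : ∀ e ∈ F, f' e < d)
    (h : ∑ e ∈ F, f e * d^e = ∑ e ∈ F, f' e * d^e) :
    ∀ e ∈ F, f e = f' e := by
  induction F using Finset.strongInduction with
  | _ F ih =>
    rcases F.eq_empty_or_nonempty with rfl | hne
    · simp
    · set M := F.max' hne with hM
      have hMF : M ∈ F := F.max'_mem hne
      have hlt : ∀ e ∈ F.erase M, e < M := fun e he =>
        lt_of_le_of_ne (F.le_max' e (mem_of_mem_erase he)) (ne_of_mem_erase he)
      have h1 : f M * d^M + ∑ e ∈ F.erase M, f e * d^e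
          = f' M * d^M + ∑ e ∈ F.erase M, f' e * d^e := by
        have h1 := h
        rw [← Finset.add_sum_erase F (fun e => f e * d^e) hMF,
            ← Finset.add_sum_erase F (fun e => f' e * d^e) hMF] at h1
        exact h1
      have b1 : ∑ e ∈ F.erase M, f e * d^e < d^M :=
        lt_pow' d hd _ M hlt f (fun e he => hf e (mem_of_mem_erase he))
      have b2 : ∑ e ∈ F.erase M, f' e * d^e < d^M :=
        lt_pow' d hd _ M hlt f' (fun e he => hf' e (mem_of_mem_erase he))
      have keymul : ∀ a b : ℕ, a < b → a * d^M + d^M ≤ b * d^M := by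
        intro a b hab
        have h := Nat.mul_le_mul_right (d^M) (Nat.succ_le_of_lt hab)
        rw [Nat.succ_mul] at h
        exact h
      have hMeq : f M = f' M := by
        rcases lt_trichotomy (f M) (f' M) with h' | h' | h'
        · have := keymul _ _ h'; omega
        · exact h'
        · have := keymul _ _ h'; omega
      have hsum : ∑ e ∈ F.erase M, f e * d^e = ∑ e ∈ F.erase M, f' e * d^e := by
        rw [hMeq] at h1; omega
      have hrest := ih (F.erase M) (erase_ssubset hMF)
        (fun e he => hf e (mem_of_mem_erase he)) (fun e he => hf' e (mem_of_mem_erase he)) hsum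
      intro e he
      by_cases h' : e = M
      · rw [h']; exact hMeq
      · exact hrest e (mem_erase.2 ⟨h', he⟩)

/-- For `j ∈ {2,…,N}`, `p₁ = ∑_{k=2}^N d^{N-k}`, digits
`i_k, i'_k ∈ {0,…,d-1}` (`k ∈ {2,…,N}∖{j}`) and `s, s' ∈ {0,…,d-1}`, if
`s·p₁ + ∑ i_k·d^{N-k} = s'·p₁ + ∑ i'_k·d^{N-k}` then `s = s'` and `i_k = i'_k` for all `k`. -/
theorem stmt10 (d N j : ℕ) (hd : 2 ≤ d) (hN : 2 ≤ N) (hj : j ∈ Finset.Icc 2 N)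
    (i i' : ℕ → ℕ)
    (hi : ∀ k ∈ (Finset.Icc 2 N).erase j, i k < d)
    (hi' : ∀ k ∈ (Finset.Icc 2 N).erase j, i' k < d)
    (s s' : ℕ) (hs : s < d) (hs' : s' < d)
    (heq : s * (∑ k ∈ Finset.Icc 2 N, d ^ (N - k)) +
            ∑ k ∈ (Finset.Icc 2 N).erase j, i k * d ^ (N - k)
        = s' * (∑ k ∈ Finset.Icc 2 N, d ^ (N - k)) +
            ∑ k ∈ (Finset.Icc 2 N).erase j, i' k * d ^ (N - k)) :
    s = s' ∧ ∀ k ∈ (Finset.Icc 2 N).erase j, i k = i' k := by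
  obtain ⟨hj2, hjN⟩ := Finset.mem_Icc.1 hj
  have trans1 : ∑ k ∈ Finset.Icc 2 N, d ^ (N - k) = ∑ e ∈ range (N-1), d ^ e := by
    refine Finset.sum_nbij' (fun k => N - k) (fun e => N - e) ?_ ?_ ?_ ?_ ?_
    · intro a ha; simp only [mem_Icc, mem_range] at *; omega
    · intro a ha; simp only [mem_Icc, mem_range] at *; omega
    · intro a ha; simp only [mem_Icc] at ha; show N - (N - a) = a; omega
    · intro a ha; simp only [mem_range] at ha; show N - (N - a) = a; omega
    · intro a _; rfl
  have trans2 : ∀ g : ℕ → ℕ, ∑ k ∈ (Finset.Icc 2 N).erase j, g k * d ^ (N - k)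
      = ∑ e ∈ (range (N-1)).erase (N-j), g (N - e) * d ^ e := by
    intro g
    refine Finset.sum_nbij' (fun k => N - k) (fun e => N - e) ?_ ?_ ?_ ?_ ?_
    · intro a ha; simp only [mem_erase, mem_Icc, mem_range] at *; omega
    · intro a ha; simp only [mem_erase, mem_Icc, mem_range] at *; omega
    · intro a ha; simp only [mem_erase, mem_Icc] at ha; show N - (N - a) = a; omega
    · intro a ha; simp only [mem_erase, mem_range] at ha; show N - (N - a) = a; omega
    · intro a ha
      simp only [mem_erase, mem_Icc] at ha
      have h : N - (N - a) = a := by omega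
      rw [h]
  have hmem : ∀ e ∈ (range (N-1)).erase (N-j), N - e ∈ (Finset.Icc 2 N).erase j := by
    intro e he
    simp only [mem_erase, mem_range] at he
    simp only [Finset.mem_erase, Finset.mem_Icc]
    omega
  have hf : ∀ e ∈ (range (N-1)).erase (N-j), i (N - e) < d := fun e he => hi _ (hmem e he)
  have hf' : ∀ e ∈ (range (N-1)).erase (N-j), i' (N - e) < d := fun e he => hi' _ (hmem e he)
  have ht : N - j < N - 1 := by omega
  have heq' : s * (∑ e ∈ range (N-1), d ^ e) + ∑ e ∈ (range (N-1)).erase (N-j), i (N-e) * d ^ e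
      = s' * (∑ e ∈ range (N-1), d ^ e) + ∑ e ∈ (range (N-1)).erase (N-j), i' (N-e) * d ^ e := by
    rw [← trans1, ← trans2 i, ← trans2 i']
    exact heq
  have hss : s = s' := by
    rcases le_total s s' with h | h
    · exact key d (N-1) (N-j) hd ht _ _ hf hf' s s' hs hs' h heq'
    · exact (key d (N-1) (N-j) hd ht _ _ hf' hf s' s hs' hs h heq'.symm).symm
  refine ⟨hss, ?_⟩
  subst hss
  have hXX : ∑ e ∈ (range (N-1)).erase (N-j), i (N-e) * d ^ e
      = ∑ e ∈ (range (N-1)).erase (N-j), i' (N-e) * d ^ e := by omega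
  have hdig := digits_unique d hd ((range (N-1)).erase (N-j)) _ _ hf hf' hXX
  intro k hk
  have hk' : N - k ∈ (range (N-1)).erase (N-j) := by
    simp only [Finset.mem_erase, Finset.mem_Icc] at hk
    simp only [mem_erase, mem_range]
    omega
  have h := hdig (N - k) hk'
  have hNk : N - (N - k) = k := by
    simp only [Finset.mem_erase, Finset.mem_Icc] at hk
    omega
  rwa [hNk] at h
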